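/- Let A be a left brace and let a ∈ A be such that a ⋆ a = 0. Then the subbrace generated by a together with ζ(⋆,A) equals ⟨a⟩ + ζ(⋆,A), and this subbrace is abelian (c ⋆ d = 0 for all its elements c, d). -/

import Mathlib

/-!
Basic theory of left braces (skew left braces of abelian type), following
Dixon–Kurdachenko–Subbotin, "On the structure of braces whose subideals are ideals".
-/

universe u v

/-- A left brace: an abelian group `(A,+)`, a group `(A,·)`, satisfying
`a(b+c) = ab + ac - a`.  (The additive and multiplicative identities then coincide.) -/
class LeftBrace (A : Type u) extends AddCommGroup A, Group A where
  mul_add_eq : ∀ a b c : A, a * (b + c) = a * b + a * c - a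

namespace LeftBrace

variable {A : Type u} [LeftBrace A]

/-- The star operation `a ⋆ b = ab - a - b`. -/
def bstar (a b : A) : A := a * b - a - b

/-- A subset of a left brace is a subbrace if it is closed under the additive-group
and multiplicative-group operations (equivalently, it is a left brace under the
restricted operations). -/
structure IsSubbrace (S : Set A) : Prop where
  zero_mem : (0 : A) ∈ S
  add_mem : ∀ {a b : A}, a ∈ S → b ∈ S → a + b ∈ S
  neg_mem : ∀ {a : A}, a ∈ S → -a ∈ S
  mul_mem : ∀ {a b : A}, a ∈ S → b ∈ S → a * b ∈ S
  inv_mem : ∀ {a : A}, a ∈ S → a⁻¹ ∈ S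

/-- `I` is an ideal of the subbrace `J`: `I ⊆ J`, both are subbraces, and
`a ⋆ z, z ⋆ a ∈ I` for all `a ∈ J`, `z ∈ I`. -/
structure IsIdealIn (I J : Set A) : Prop where
  subset : I ⊆ J
  subbrace : IsSubbrace I
  ambient_subbrace : IsSubbrace J
  star_mem_left : ∀ a ∈ J, ∀ z ∈ I, bstar a z ∈ I
  star_mem_right : ∀ a ∈ J, ∀ z ∈ I, bstar z a ∈ I

/-- `I` is an ideal of the brace `A`. -/
def IsIdeal (I : Set A) : Prop := IsIdealIn I (Set.univ : Set A)

/-- `A` is a T-brace if being an ideal is a transitive relation: an ideal of an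
ideal of `A` is an ideal of `A`. -/
def IsTBrace (A : Type u) [LeftBrace A] : Prop :=
  ∀ I J : Set A, IsIdealIn I J → IsIdeal J → IsIdeal I

/-- The `⋆`-center `ζ(⋆,A) = {a | a ⋆ x = x ⋆ a = 0 for all x}`. -/
def starCenter (A : Type u) [LeftBrace A] : Set A :=
  {a : A | ∀ x : A, bstar a x = 0 ∧ bstar x a = 0}

/-- The preimage in `A` of the `⋆`-center of the quotient of `A` by (the ideal) `S`:
`a` belongs to it iff `a ⋆ x ∈ S` and `x ⋆ a ∈ S` for every `x ∈ A`. -/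
def nextCenter (A : Type u) [LeftBrace A] (S : Set A) : Set A :=
  {a : A | ∀ x : A, bstar a x ∈ S ∧ bstar x a ∈ S}

/-- The upper `⋆`-central series, indexed by naturals:
`ζ₀(⋆,A) = 0` and `ζ_{n+1}(⋆,A)/ζ_n(⋆,A) = ζ(⋆, A/ζ_n(⋆,A))`. -/
def zetaNat (A : Type u) [LeftBrace A] : ℕ → Set A
  | 0 => ({0} : Set A)
  | n + 1 => nextCenter A (zetaNat A n)

/-- The upper `⋆`-central series, indexed by ordinals (unions at limit ordinals). -/
noncomputable def zetaOrd (A : Type u) [LeftBrace A] (o : Ordinal.{v}) : Set A :=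
  Ordinal.limitRecOn o (({0} : Set A))
    (fun _ ih => nextCenter A ih)
    (fun o _ ih => ⋃ (o' : Ordinal) (h : o' < o), ih o' h)

/-- The upper `⋆`-hypercenter `ζ_∞(⋆,A)`: the final (stable) term of the upper
`⋆`-central series, i.e. the union of all its terms. -/
noncomputable def starHypercenter (A : Type u) [LeftBrace A] : Set A :=
  ⋃ o : Ordinal.{u}, zetaOrd A o

/-- `A` is `⋆`-hypercentral if `A = ζ_γ(⋆,A)` for some ordinal `γ`. -/
def IsStarHypercentral (A : Type u) [LeftBrace A] : Prop :=
  ∃ γ : Ordinal.{u}, zetaOrd A γ = (Set.univ : Set A)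

/-- `K ⋆ L`: the additive subgroup of `(A,+)` generated by all `x ⋆ y`, `x ∈ K`, `y ∈ L`. -/
def setStar (K L : Set A) : AddSubgroup A :=
  AddSubgroup.closure {z : A | ∃ x ∈ K, ∃ y ∈ L, z = bstar x y}

/-- `rightStarSeries A n = A^{(n+1)}`, where `A^{(1)} = A` and `A^{(n+1)} = A^{(n)} ⋆ A`. -/
def rightStarSeries (A : Type u) [LeftBrace A] : ℕ → Set A
  | 0 => (Set.univ : Set A)
  | n + 1 => ((setStar (rightStarSeries A n) (Set.univ : Set A) : AddSubgroup A) : Set A)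

/-- `leftStarSeries A n = A^{n+1}`, where `A^1 = A` and `A^{n+1} = A ⋆ A^n`. -/
def leftStarSeries (A : Type u) [LeftBrace A] : ℕ → Set A
  | 0 => (Set.univ : Set A)
  | n + 1 => ((setStar (Set.univ : Set A) (leftStarSeries A n) : AddSubgroup A) : Set A)

/-- `A` is Smoktunowicz-nilpotent if `A^{(n)} = A^k = 0` for some naturals `n, k`. -/
def IsSmoktunowiczNilpotent (A : Type u) [LeftBrace A] : Prop :=
  ∃ n k : ℕ, rightStarSeries A n = ({0} : Set A) ∧ leftStarSeries A k = ({0} : Set A)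

/-- The subbrace generated by a subset `M`: the intersection of all subbraces containing `M`. -/
def braceClosure (M : Set A) : Set A := ⋂₀ {S : Set A | IsSubbrace S ∧ M ⊆ S}

end LeftBrace

namespace BraceAux

open LeftBrace

variable {A : Type u} [LeftBrace A]

lemma lam_add (a b c : A) : a * (b + c) - a = (a * b - a) + (a * c - a) := by
  rw [mul_add_eq]; abel

lemma mul_zero' (a : A) : a * 0 = a := by
  have h := lam_add a 0 0
  rw [add_zero] at h
  have h0 : a * 0 - a = 0 := left_eq_add.mp h
  have := sub_eq_zero.mp h0
  exact this

lemma one_eq_zero : (1 : A) = 0 := by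
  have := mul_zero' (1 : A)
  rw [one_mul] at this
  exact this.symm

/-- The lambda map `x ↦ a * x - a` as an additive homomorphism. -/
def lamHom (a : A) : A →+ A where
  toFun x := a * x - a
  map_zero' := by show a * 0 - a = 0; rw [mul_zero', sub_self]
  map_add' b c := lam_add a b c

lemma lamHom_apply (a x : A) : lamHom a x = a * x - a := rfl

lemma zero_mul' (x : A) : (0 : A) * x = x := by rw [← one_eq_zero, one_mul]

lemma center_mul_left {z : A} (hz : z ∈ starCenter A) (x : A) : z * x = z + x := by
  have h := (hz x).1
  simp only [bstar, sub_sub, sub_eq_zero] at h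
  exact h

lemma center_mul_right {z : A} (hz : z ∈ starCenter A) (x : A) : x * z = x + z := by
  have h := (hz x).2
  simp only [bstar, sub_sub, sub_eq_zero] at h
  exact h

lemma mem_center (z : A) (h1 : ∀ x, z * x = z + x) (h2 : ∀ x, x * z = x + z) :
    z ∈ starCenter A := fun x =>
  ⟨by rw [bstar, h1]; abel, by rw [bstar, h2]; abel⟩

lemma zero_mem_center : (0 : A) ∈ starCenter A :=
  mem_center _ (fun x => by rw [zero_mul', zero_add]) (fun x => by rw [mul_zero', add_zero])

lemma add_mem_center {z w : A} (hz : z ∈ starCenter A) (hw : w ∈ starCenter A) :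
    z + w ∈ starCenter A := by
  refine mem_center _ (fun x => ?_) (fun x => ?_)
  · rw [← center_mul_left hz w, mul_assoc, center_mul_left hw, center_mul_left hz,
      center_mul_left hz, add_assoc]
  · rw [mul_add_eq, center_mul_right hz, center_mul_right hw]; abel

lemma center_inv_eq_neg {z : A} (hz : z ∈ starCenter A) : z⁻¹ = -z := by
  apply inv_eq_of_mul_eq_one_right
  rw [center_mul_left hz, one_eq_zero]; abel

lemma neg_mem_center {z : A} (hz : z ∈ starCenter A) : -z ∈ starCenter A := by
  refine mem_center _ (fun x => ?_) (fun x => ?_)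
  · rw [← center_inv_eq_neg hz]
    have h1 : z + z⁻¹ * x = x := by
      rw [← center_mul_left hz, ← mul_assoc, mul_inv_cancel, one_mul]
    calc z⁻¹ * x = z + z⁻¹ * x - z := by abel
      _ = x - z := by rw [h1]
      _ = z⁻¹ + x := by rw [center_inv_eq_neg hz]; abel
  · have h : x * z + x * (-z) - x = x := by
      rw [← mul_add_eq, show z + -z = (0 : A) from by abel, mul_zero']
    rw [center_mul_right hz] at h
    calc x * (-z) = x + z + x * (-z) - x - z - z + z := by abel
      _ = x - z - z + z := by rw [h]
      _ = x + -z := by abel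

lemma mul_mem_center {z w : A} (hz : z ∈ starCenter A) (hw : w ∈ starCenter A) :
    z * w ∈ starCenter A := by
  rw [center_mul_left hz]; exact add_mem_center hz hw

lemma inv_mem_center {z : A} (hz : z ∈ starCenter A) : z⁻¹ ∈ starCenter A := by
  rw [center_inv_eq_neg hz]; exact neg_mem_center hz

section Sq

variable {a : A} (h' : a * a = a + a)
include h'

lemma lam_self : lamHom a a = a := by
  rw [lamHom_apply, h']; abel

lemma lam_fix (n : ℤ) : a * (n • a) = n • a + a := by
  have h1 : lamHom a (n • a) = n • a := by rw [map_zsmul, lam_self h']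
  rw [lamHom_apply] at h1
  calc a * (n • a) = a * (n • a) - a + a := by abel
    _ = n • a + a := by rw [h1]

lemma lam_inj : Function.Injective (lamHom a) := by
  intro x y hxy
  simp only [lamHom_apply, sub_left_inj] at hxy
  exact mul_left_cancel hxy

lemma inv_eq_neg : a⁻¹ = -a := by
  apply lam_inj h'
  rw [map_neg, lam_self h', lamHom_apply, mul_inv_cancel, one_eq_zero]
  abel

lemma inv_lam_fix (n : ℤ) : a⁻¹ * (n • a) = n • a - a := by
  have h0 : lamHom a⁻¹ a = a := by
    rw [lamHom_apply, inv_mul_cancel, one_eq_zero, inv_eq_neg h']; abel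
  have h1 : lamHom a⁻¹ (n • a) = n • a := by rw [map_zsmul, h0]
  rw [lamHom_apply, inv_eq_neg h'] at h1
  calc a⁻¹ * (n • a) = (-a) * (n • a) - (-a) + (-a) := by rw [inv_eq_neg h']; abel
    _ = n • a + -a := by rw [h1]
    _ = n • a - a := by abel

lemma zpow_eq_smul : ∀ n : ℤ, a ^ n = n • a := by
  intro n
  induction n using Int.induction_on with
  | zero => rw [zpow_zero, zero_zsmul, one_eq_zero]
  | succ i ih =>
      rw [show (i : ℤ) + 1 = 1 + i from by ring, zpow_add, zpow_one, ih, lam_fix h',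
        add_zsmul, one_zsmul]
      abel
  | pred i ih =>
      rw [show -(i : ℤ) - 1 = -1 + -i from by ring, zpow_add, zpow_neg_one, ih,
        inv_lam_fix h', add_zsmul]
      abel

lemma smul_mul_smul (m n : ℤ) : (m • a) * (n • a) = (m + n) • a := by
  rw [← zpow_eq_smul h', ← zpow_eq_smul h', ← zpow_add, zpow_eq_smul h']

end Sq

lemma add_center_mul {z : A} (hz : z ∈ starCenter A) (c y : A) :
    (c + z) * y = c * y + z := by
  rw [← center_mul_right hz c, mul_assoc, center_mul_left hz, mul_add_eq,
    center_mul_right hz]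
  abel

lemma mul_center_add {w : A} (hw : w ∈ starCenter A) (c y : A) :
    c * (y + w) = c * y + w := by
  rw [mul_add_eq, center_mul_right hw]; abel

lemma prod_formula {a : A} (h' : a * a = a + a) (m n : ℤ) {z w : A}
    (hz : z ∈ starCenter A) (hw : w ∈ starCenter A) :
    (m • a + z) * (n • a + w) = (m + n) • a + (z + w) := by
  rw [add_center_mul hz, mul_center_add hw, smul_mul_smul h']
  abel

lemma zsmul_mem_of {T : Set A} (hT : IsSubbrace T) {b : A} (hb : b ∈ T) (n : ℤ) :
    n • b ∈ T := by
  induction n using Int.induction_on with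
  | zero => rw [zero_zsmul]; exact hT.zero_mem
  | succ i ih =>
      rw [add_zsmul, one_zsmul]; exact hT.add_mem ih hb
  | pred i ih =>
      have e : (-(i : ℤ) - 1) • b = (-(i : ℤ)) • b + -b := by
        rw [sub_zsmul, one_zsmul]
      rw [e]
      exact hT.add_mem ih (hT.neg_mem hb)

end BraceAux

open LeftBrace in
/-- **Lemma.** Let `A` be a left brace and `a ∈ A` with `a ⋆ a = 0`.  Then the subbrace
generated by `a` and `ζ(⋆,A)` equals `⟨a⟩ + ζ(⋆,A)`, and this subbrace is abelian. -/
theorem braceClosure_union_starCenter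
    {A : Type u} [LeftBrace A] (a : A) (h : bstar a a = 0) :
    braceClosure ({a} ∪ starCenter A) =
        {x : A | ∃ n : ℤ, ∃ z ∈ starCenter A, x = n • a + z} ∧
      ∀ c ∈ braceClosure ({a} ∪ starCenter A),
        ∀ d ∈ braceClosure ({a} ∪ starCenter A), bstar c d = 0 := by
  have h' : a * a = a + a := by
    rw [bstar] at h
    calc a * a = (a * a - a - a) + a + a := by abel
      _ = 0 + a + a := by rw [h]
      _ = a + a := by abel
  have hS : IsSubbrace {x : A | ∃ n : ℤ, ∃ z ∈ starCenter A, x = n • a + z} := by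
    constructor
    · exact ⟨0, 0, BraceAux.zero_mem_center, by simp⟩
    · rintro x y ⟨m, z, hz, rfl⟩ ⟨n, w, hw, rfl⟩
      exact ⟨m + n, z + w, BraceAux.add_mem_center hz hw, by rw [add_zsmul]; abel⟩
    · rintro x ⟨n, z, hz, rfl⟩
      exact ⟨-n, -z, BraceAux.neg_mem_center hz, by rw [neg_zsmul]; abel⟩
    · rintro x y ⟨m, z, hz, rfl⟩ ⟨n, w, hw, rfl⟩
      exact ⟨m + n, z + w, BraceAux.add_mem_center hz hw,
        BraceAux.prod_formula h' m n hz hw⟩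
    · rintro x ⟨n, z, hz, rfl⟩
      refine ⟨-n, -z, BraceAux.neg_mem_center hz, ?_⟩
      apply inv_eq_of_mul_eq_one_right
      rw [BraceAux.prod_formula h' n (-n) hz (BraceAux.neg_mem_center hz),
        BraceAux.one_eq_zero]
      simp
  have hMS : ({a} ∪ starCenter A : Set A) ⊆
      {x : A | ∃ n : ℤ, ∃ z ∈ starCenter A, x = n • a + z} := by
    rintro x (rfl | hx)
    · exact ⟨1, 0, BraceAux.zero_mem_center, by simp⟩
    · exact ⟨0, x, hx, by simp⟩
  have hsub1 : braceClosure ({a} ∪ starCenter A) ⊆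
      {x : A | ∃ n : ℤ, ∃ z ∈ starCenter A, x = n • a + z} :=
    Set.sInter_subset_of_mem ⟨hS, hMS⟩
  have hsub2 : {x : A | ∃ n : ℤ, ∃ z ∈ starCenter A, x = n • a + z} ⊆
      braceClosure ({a} ∪ starCenter A) := by
    rintro x ⟨n, z, hz, rfl⟩
    apply Set.mem_sInter.mpr
    rintro T ⟨hT, hMT⟩
    exact hT.add_mem (BraceAux.zsmul_mem_of hT (hMT (Or.inl rfl)) n) (hMT (Or.inr hz))
  refine ⟨Set.Subset.antisymm hsub1 hsub2, ?_⟩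
  intro c hc d hd
  obtain ⟨m, z, hz, rfl⟩ := hsub1 hc
  obtain ⟨n, w, hw, rfl⟩ := hsub1 hd
  rw [bstar, BraceAux.prod_formula h' m n hz hw, add_zsmul]
  abel
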